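/- Let α ≥ 0, F_out > 0, and x̄ ≥ ȳ ≥ 0 with F_out·(x̄² + ȳ²) ≤ 2x̄. If α/√(1+α²) ≥ F_out·x̄ and F_out ≥ 2ȳ/(x̄² + ȳ²), then α/√(1+α²) ≥ F_out·x̄/2 + F_out·ȳ·√(F_out⁻²/(x̄² + ȳ²) − 1/4). -/

import Mathlib

/-- Reduction of the slope condition in the circle-connection lemma. -/
theorem slope_condition_reduction (α Fout xb yb : ℝ) (hα : 0 ≤ α) (hFout : 0 < Fout)
    (hy : 0 ≤ yb) (hxy : yb ≤ xb) (hcurv : Fout * (xb ^ 2 + yb ^ 2) ≤ 2 * xb)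
    (h1 : α / Real.sqrt (1 + α ^ 2) ≥ Fout * xb)
    (h2 : Fout ≥ 2 * yb / (xb ^ 2 + yb ^ 2)) :
    α / Real.sqrt (1 + α ^ 2) ≥
      Fout * xb / 2 + Fout * yb * Real.sqrt (Fout⁻¹ ^ 2 / (xb ^ 2 + yb ^ 2) - 1 / 4) := by
  have hx : 0 ≤ xb := le_trans hy hxy
  have hkey : Fout * yb * Real.sqrt (Fout⁻¹ ^ 2 / (xb ^ 2 + yb ^ 2) - 1 / 4) ≤ Fout * xb / 2 := by
    rcases eq_or_lt_of_le hy with hy0 | hy0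
    · rw [← hy0]
      simp
      positivity
    · -- yb > 0
      have hs : 0 < xb ^ 2 + yb ^ 2 := by positivity
      have hinv : Fout⁻¹ ≤ (xb ^ 2 + yb ^ 2) / (2 * yb) := by
        rw [ge_iff_le, div_le_iff₀ hs] at h2
        rw [inv_le_comm₀ hFout (by positivity), inv_div, div_le_iff₀ hs]
        linarith
      have hsq : Fout⁻¹ ^ 2 / (xb ^ 2 + yb ^ 2) - 1 / 4 ≤ xb ^ 2 / (2 * yb) ^ 2 := by
        have h3 : Fout⁻¹ ^ 2 ≤ ((xb ^ 2 + yb ^ 2) / (2 * yb)) ^ 2 := by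
          apply pow_le_pow_left₀ (le_of_lt (inv_pos.mpr hFout)) hinv
        have h4 : Fout⁻¹ ^ 2 / (xb ^ 2 + yb ^ 2) ≤
            ((xb ^ 2 + yb ^ 2) / (2 * yb)) ^ 2 / (xb ^ 2 + yb ^ 2) :=
          by gcongr
        have heq : ((xb ^ 2 + yb ^ 2) / (2 * yb)) ^ 2 / (xb ^ 2 + yb ^ 2)
            = xb ^ 2 / (2 * yb) ^ 2 + 1 / 4 := by
          field_simp
          ring
        linarith [h4, heq ▸ h4]
      have hsqrt : Real.sqrt (Fout⁻¹ ^ 2 / (xb ^ 2 + yb ^ 2) - 1 / 4) ≤ xb / (2 * yb) := by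
        calc Real.sqrt (Fout⁻¹ ^ 2 / (xb ^ 2 + yb ^ 2) - 1 / 4)
            ≤ Real.sqrt (xb ^ 2 / (2 * yb) ^ 2) := Real.sqrt_le_sqrt hsq
          _ = xb / (2 * yb) := by
              rw [← div_pow, Real.sqrt_sq (by positivity)]
      calc Fout * yb * Real.sqrt (Fout⁻¹ ^ 2 / (xb ^ 2 + yb ^ 2) - 1 / 4)
          ≤ Fout * yb * (xb / (2 * yb)) := by
            apply mul_le_mul_of_nonneg_left hsqrt (by positivity)
        _ = Fout * xb / 2 := by field_simp
  have hFx : 0 ≤ Fout * xb := by positivity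
  linarith
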